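/- A metric space (X,d) is ultrametric if and only if for every discrete (purely atomic, countably supported, finite on closed balls) Borel measure μ on X, the centered and non-centered Hardy–Littlewood maximal operators with respect to μ coincide on L^1(μ) at every point of the support of μ. -/

import Mathlib

open MeasureTheory Metric ENNReal Filter

/-- A set is a (nondegenerate) closed ball. -/
def IsClosedBall {X : Type*} [MetricSpace X] (B : Set X) : Prop :=
  ∃ (c : X) (r : ℝ), 0 < r ∧ B = Metric.closedBall c r

/-- The support of a measure: points all of whose neighborhoods have positive measure. -/
def suppM {X : Type*} [MetricSpace X] [MeasurableSpace X] (μ : Measure X) : Set X :=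
  {x | ∀ r > (0 : ℝ), 0 < μ (Metric.ball x r)}

/-- Average of `f` over a set, declared `0` when the set is `μ`-null. -/
noncomputable def avg {X : Type*} [MetricSpace X] [MeasurableSpace X]
    (μ : Measure X) (f : X → ℝ≥0∞) (B : Set X) : ℝ≥0∞ :=
  if μ B = 0 then 0 else (∫⁻ y in B, f y ∂μ) / μ B

/-- Centered Hardy–Littlewood maximal function. -/
noncomputable def Mc {X : Type*} [MetricSpace X] [MeasurableSpace X]
    (μ : Measure X) (f : X → ℝ≥0∞) (x : X) : ℝ≥0∞ :=
  ⨆ r > (0 : ℝ), avg μ f (Metric.closedBall x r)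

/-- Non-centered Hardy–Littlewood maximal function. -/
noncomputable def Munc {X : Type*} [MetricSpace X] [MeasurableSpace X]
    (μ : Measure X) (f : X → ℝ≥0∞) (x : X) : ℝ≥0∞ :=
  ⨆ B ∈ {B : Set X | IsClosedBall B ∧ x ∈ B}, avg μ f B

/-- Ratio of measures with the convention `0` when the denominator vanishes. -/
noncomputable def ratio0 {X : Type*} [MeasurableSpace X] (μ ν : MeasureTheory.Measure X) (B : Set X) : ℝ≥0∞ :=
  if μ B = 0 then 0 else ν B / μ B

/-- Centered maximal function of a measure `ν` with respect to `μ`. -/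
noncomputable def McMeas {X : Type*} [MetricSpace X] [MeasurableSpace X]
    (μ ν : Measure X) (x : X) : ℝ≥0∞ :=
  ⨆ r > (0 : ℝ), ratio0 μ ν (Metric.closedBall x r)

/-- Non-centered maximal function of a measure `ν` with respect to `μ`. -/
noncomputable def MuncMeas {X : Type*} [MetricSpace X] [MeasurableSpace X]
    (μ ν : Measure X) (x : X) : ℝ≥0∞ :=
  ⨆ B ∈ {B : Set X | IsClosedBall B ∧ x ∈ B}, ratio0 μ ν B

/-- In an ultrametric space, any point of a closed ball is a center. -/
lemma ball_recenter {X : Type*} [MetricSpace X]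
    (H : ∀ a b c : X, dist a c ≤ max (dist a b) (dist b c))
    {c z : X} {r : ℝ} (hz : z ∈ Metric.closedBall c r) :
    Metric.closedBall c r = Metric.closedBall z r := by
  simp only [Metric.mem_closedBall] at hz
  ext y
  simp only [Metric.mem_closedBall]
  constructor
  · intro hy
    calc dist y z ≤ max (dist y c) (dist c z) := H y c z
      _ ≤ r := max_le hy (by rwa [dist_comm] at hz)
  · intro hy
    calc dist y c ≤ max (dist y z) (dist z c) := H y z c
      _ ≤ r := max_le hy hz

/-- The counterexample construction for the reverse direction. -/
lemma counterexample_aux {X : Type*} [MetricSpace X] [MeasurableSpace X] [BorelSpace X]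
    (a b c : X) (h1 : dist a b ≤ dist b c) (h2 : max (dist a b) (dist b c) < dist a c)
    (hRHS : ∀ μ : Measure X,
        (∃ (w : ℕ → ℝ≥0∞) (p : ℕ → X),
          μ = Measure.sum (fun n => w n • Measure.dirac (p n))) →
        (∀ (c : X) (r : ℝ), μ (closedBall c r) ≠ ∞) →
        ∀ f : X → ℝ≥0∞, Measurable f → (∫⁻ z, f z ∂μ) ≠ ∞ →
        ∀ z ∈ suppM μ, Mc μ f z = Munc μ f z) : False := by
  have hac : a ≠ c := by
    intro h; subst h
    simp only [dist_self] at h2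
    exact absurd h2 (not_lt.mpr (dist_nonneg.trans (le_max_left _ _)))
  have hbc : b ≠ c := by
    intro h; subst h
    simp only [dist_self, max_eq_left dist_nonneg] at h2
    exact lt_irrefl _ h2
  have hab : a ≠ b := by
    intro h; subst h
    simp only [dist_self, max_eq_right dist_nonneg] at h2
    exact lt_irrefl _ h2
  -- distances
  have hbcpos : (0:ℝ) < dist b c := dist_pos.mpr hbc
  -- the measure
  set μ : Measure X := Measure.dirac a + Measure.dirac b + Measure.dirac c with hμdef
  have hμs : ∀ s : Set X,
      μ s = s.indicator 1 a + s.indicator 1 b + s.indicator 1 c := by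
    intro s
    simp [hμdef, Measure.dirac_apply]
  -- discreteness witness
  have hdisc : ∃ (w : ℕ → ℝ≥0∞) (p : ℕ → X),
      μ = Measure.sum (fun n => w n • Measure.dirac (p n)) := by
    refine ⟨fun n => if n < 3 then 1 else 0, fun n => if n = 0 then a else if n = 1 then b else c, ?_⟩
    ext s hs
    rw [Measure.sum_apply _ hs]
    rw [tsum_eq_sum (s := Finset.range 3) (fun n hn => by
      simp only [Finset.mem_range, not_lt] at hn
      simp [Nat.not_lt.mpr hn])]
    simp [Finset.sum_range_succ, Measure.smul_apply, Measure.add_apply,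
      Measure.dirac_apply, add_assoc]
    rw [hμs s, add_assoc]
  -- finite on balls
  have hfin : ∀ (c' : X) (r : ℝ), μ (closedBall c' r) ≠ ∞ :=
    fun c' r => measure_ne_top μ _
  -- the function
  set f : X → ℝ≥0∞ := Set.indicator {c} 1 with hfdef
  have hfmeas : Measurable f := measurable_one.indicator (measurableSet_singleton c)
  have hμc : μ {c} = 1 := by rw [hμs]; simp [Set.indicator_apply, hac, hbc]
  have hμb : μ {b} = 1 := by rw [hμs]; simp [Set.indicator_apply, hab, Ne.symm hbc]
  have hint : (∫⁻ z, f z ∂μ) ≠ ∞ := by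
    rw [hfdef, lintegral_indicator_one (measurableSet_singleton c), hμc]
    exact one_ne_top
  have hsupp : b ∈ suppM μ := by
    intro r hr
    have h1' : μ {b} ≤ μ (Metric.ball b r) :=
      measure_mono (Set.singleton_subset_iff.mpr (Metric.mem_ball_self hr))
    rw [hμb] at h1'
    exact zero_lt_one.trans_le h1'
  have heq := hRHS μ hdisc hfin f hfmeas hint b hsupp
  have hnum : ∀ s : Set X, MeasurableSet s → (∫⁻ y in s, f y ∂μ) = μ ({c} ∩ s) := by
    intro s hs
    rw [hfdef, lintegral_indicator_one (measurableSet_singleton c),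
      Measure.restrict_apply (measurableSet_singleton c)]
  have hMc : Mc μ f b ≤ 1/3 := by
    apply iSup₂_le
    intro r hr
    unfold avg
    split_ifs with h
    · exact zero_le
    · rw [hnum _ measurableSet_closedBall]
      by_cases hcr : dist b c ≤ r
      · have ha' : a ∈ Metric.closedBall b r :=
          Metric.mem_closedBall.mpr (le_trans h1 hcr)
        have hb' : b ∈ Metric.closedBall b r := Metric.mem_closedBall_self hr.le
        have hc' : c ∈ Metric.closedBall b r := by
          rw [Metric.mem_closedBall, dist_comm]; exact hcr
        have hμB : μ (Metric.closedBall b r) = 3 := by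
          rw [hμs]
          rw [Set.indicator_of_mem ha', Set.indicator_of_mem hb', Set.indicator_of_mem hc']
          norm_num
        have hnum1 : μ ({c} ∩ Metric.closedBall b r) = 1 := by
          rw [Set.inter_eq_left.mpr (Set.singleton_subset_iff.mpr hc'), hμc]
        rw [hnum1, hμB]
      · have hempty : ({c} : Set X) ∩ Metric.closedBall b r = ∅ := by
          apply Set.eq_empty_iff_forall_notMem.mpr
          rintro x ⟨hx1, hx2⟩
          rw [Set.mem_singleton_iff] at hx1
          subst hx1
          rw [Metric.mem_closedBall, dist_comm] at hx2
          exact hcr hx2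
        rw [hempty]
        simp
  have hMunc : (1:ℝ≥0∞)/2 ≤ Munc μ f b := by
    have hc' : c ∈ Metric.closedBall c (dist b c) := Metric.mem_closedBall_self hbcpos.le
    have hb' : b ∈ Metric.closedBall c (dist b c) := Metric.mem_closedBall.mpr le_rfl
    have ha' : a ∉ Metric.closedBall c (dist b c) := by
      rw [Metric.mem_closedBall]
      push_neg
      exact lt_of_le_of_lt (le_max_right _ _) h2
    have hBmem : Metric.closedBall c (dist b c) ∈ {B : Set X | IsClosedBall B ∧ b ∈ B} :=
      ⟨⟨c, dist b c, hbcpos, rfl⟩, hb'⟩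
    have hμB : μ (Metric.closedBall c (dist b c)) = 2 := by
      rw [hμs]
      rw [Set.indicator_of_notMem ha', Set.indicator_of_mem hb', Set.indicator_of_mem hc']
      norm_num
    refine le_trans ?_ (le_iSup₂ (f := fun B (_ : B ∈ {B : Set X | IsClosedBall B ∧ b ∈ B}) => avg μ f B) _ hBmem)
    unfold avg
    rw [if_neg (by rw [hμB]; norm_num)]
    rw [hnum _ measurableSet_closedBall,
      Set.inter_eq_left.mpr (Set.singleton_subset_iff.mpr hc'), hμc, hμB]
  have hcontra : (1:ℝ≥0∞)/2 ≤ 1/3 := le_trans hMunc (heq ▸ hMc)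
  norm_num at hcontra



/-- A metric space is ultrametric iff for every discrete measure the centered and
non-centered maximal operators coincide on `L¹` at every support point. -/
theorem ultrametric_iff_maximal_eq_discrete {X : Type*} [MetricSpace X] [MeasurableSpace X]
    [BorelSpace X] :
    (∀ a b c : X, dist a c ≤ max (dist a b) (dist b c)) ↔
      (∀ μ : Measure X,
        (∃ (w : ℕ → ℝ≥0∞) (p : ℕ → X),
          μ = Measure.sum (fun n => w n • Measure.dirac (p n))) →
        (∀ (c : X) (r : ℝ), μ (closedBall c r) ≠ ∞) →
        ∀ f : X → ℝ≥0∞, Measurable f → (∫⁻ z, f z ∂μ) ≠ ∞ →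
        ∀ z ∈ suppM μ, Mc μ f z = Munc μ f z) := by
  constructor
  · intro H μ _ _ f _ _ z _
    unfold Mc Munc
    apply le_antisymm
    · apply iSup₂_le
      intro r hr
      exact le_iSup₂_of_le (Metric.closedBall z r)
        ⟨⟨z, r, hr, rfl⟩, Metric.mem_closedBall_self hr.le⟩ le_rfl
    · apply iSup₂_le
      rintro B ⟨⟨c, r, hr, rfl⟩, hzB⟩
      rw [ball_recenter H hzB]
      exact le_iSup₂_of_le r hr le_rfl
  · intro hRHS
    by_contra hne
    push_neg at hne
    obtain ⟨a, b, c, hd⟩ := hne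
    rcases le_total (dist a b) (dist b c) with h | h
    · exact counterexample_aux a b c h hd hRHS
    · refine counterexample_aux c b a ?_ ?_ hRHS
      · rw [dist_comm c b, dist_comm b a]; exact h
      · rw [dist_comm c b, dist_comm b a, dist_comm c a, max_comm]; exact hd
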